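/- Let w be a weight structure on a triangulated category C, and D ⊂ C a triangulated subcategory such that w induces a weight structure on D (meaning Obj D ∩ C^{w≤0} and Obj D ∩ C^{w≥0} form a weight structure for D). Then the Karoubi-closures of C^{w≤0} and C^{w≥0}, considered as classes of objects of the Verdier quotient C/D, define a weight structure w' on C/D. -/

import Mathlib

open CategoryTheory Category Limits Pretriangulated

/-- `X` is a retract of `Y`. -/
def IsRetract {C : Type*} [Category C] (X Y : C) : Prop :=
  ∃ (i : X ⟶ Y) (r : Y ⟶ X), i ≫ r = 𝟙 X

/-- A weight structure on a triangulated category `C`, given by the pair of classes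
`le = C^{w≤0}` and `ge = C^{w≥0}` (Bondarko). -/
structure IsWeightStructure (C : Type*) [Category C] [HasZeroObject C] [HasShift C ℤ]
    [Preadditive C] [∀ n : ℤ, (shiftFunctor C n).Additive] [Pretriangulated C]
    (le ge : Set C) : Prop where
  le_retract : ∀ ⦃X Y : C⦄, Y ∈ le → IsRetract X Y → X ∈ le
  ge_retract : ∀ ⦃X Y : C⦄, Y ∈ ge → IsRetract X Y → X ∈ ge
  le_shift : ∀ ⦃X : C⦄, X ∈ le → X⟦(1 : ℤ)⟧ ∈ le
  ge_shift : ∀ ⦃X : C⦄, X ∈ ge → X⟦(-1 : ℤ)⟧ ∈ ge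
  orth : ∀ ⦃X Y : C⦄, X ∈ ge → Y ∈ le → ∀ f : X ⟶ Y⟦(1 : ℤ)⟧, f = 0
  decomp : ∀ M : C, ∃ (A B : C) (_ : A ∈ le) (_ : B ∈ ge)
    (f : M ⟶ A) (g : A ⟶ B) (h : B ⟶ M⟦(1 : ℤ)⟧), Triangle.mk f g h ∈ distTriang C
variable {C : Type*} [Category C] [HasZeroObject C] [HasShift C ℤ]
  [Preadditive C] [∀ n : ℤ, (shiftFunctor C n).Additive] [Pretriangulated C]
variable {E : Type*} [Category E] [HasZeroObject E] [HasShift E ℤ]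
  [Preadditive E] [∀ n : ℤ, (shiftFunctor E n).Additive] [Pretriangulated E]

/-- `T` is the class of objects of a strictly full triangulated subcategory:
closed under isomorphisms, shifts in both directions, and cones. -/
def TriangClosed (T : Set C) : Prop :=
  (∀ ⦃X Y : C⦄, Y ∈ T → Nonempty (X ≅ Y) → X ∈ T) ∧
  (∀ ⦃X : C⦄, X ∈ T → X⟦(1 : ℤ)⟧ ∈ T) ∧
  (∀ ⦃X : C⦄, X ∈ T → X⟦(-1 : ℤ)⟧ ∈ T) ∧
  (∀ Tr ∈ distTriang C, Tr.obj₁ ∈ T → Tr.obj₂ ∈ T → Tr.obj₃ ∈ T)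

/-- A weight structure on the full triangulated subcategory of `C` whose objects form
the class `T` (all conditions are relativized to `T`). -/
structure IsWeightStructureOn (T le ge : Set C) : Prop where
  le_sub : le ⊆ T
  ge_sub : ge ⊆ T
  le_retract : ∀ ⦃X Y : C⦄, X ∈ T → Y ∈ le → IsRetract X Y → X ∈ le
  ge_retract : ∀ ⦃X Y : C⦄, X ∈ T → Y ∈ ge → IsRetract X Y → X ∈ ge
  le_shift : ∀ ⦃X : C⦄, X ∈ le → X⟦(1 : ℤ)⟧ ∈ le
  ge_shift : ∀ ⦃X : C⦄, X ∈ ge → X⟦(-1 : ℤ)⟧ ∈ ge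
  orth : ∀ ⦃X Y : C⦄, X ∈ ge → Y ∈ le → ∀ f : X ⟶ Y⟦(1 : ℤ)⟧, f = 0
  decomp : ∀ M ∈ T, ∃ (A B : C) (_ : A ∈ le) (_ : B ∈ ge)
    (f : M ⟶ A) (g : A ⟶ B) (h : B ⟶ M⟦(1 : ℤ)⟧), Triangle.mk f g h ∈ distTriang C

/-- The class of morphisms of `C` whose cone lies in `DSet`; the Verdier quotient `C/D`
is the localization of `C` at this class. -/
def coneInClass (DSet : Set C) : MorphismProperty C := fun X _ f =>
  ∃ (Z : C) (g : _ ⟶ Z) (h : Z ⟶ X⟦(1 : ℤ)⟧),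
    Triangle.mk f g h ∈ (distTriang C) ∧ Z ∈ DSet

section Auxiliary

/-- The multiplicative closure of a class of morphisms. -/
inductive MClos {D : Type*} [Category D] (W : MorphismProperty D) : ∀ ⦃X Y : D⦄, (X ⟶ Y) → Prop
  | of ⦃X Y : D⦄ (f : X ⟶ Y) (hf : W f) : MClos W f
  | id (X : D) : MClos W (𝟙 X)
  | comp ⦃X Y Z : D⦄ (f : X ⟶ Y) (g : Y ⟶ Z) (hf : MClos W f) (hg : MClos W g) :
      MClos W (f ≫ g)

/-- The multiplicative closure as a `MorphismProperty`. -/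
def mclos {D : Type*} [Category D] (W : MorphismProperty D) : MorphismProperty D :=
  fun _ _ f => MClos W f

lemma MClos.isInvertedBy {D D' : Type*} [Category D] [Category D'] {W : MorphismProperty D}
    {F : D ⥤ D'} (hF : W.IsInvertedBy F) :
    (mclos W).IsInvertedBy F := by
  intro X Y f hf
  induction hf with
  | of f hf => exact hF f hf
  | id X => rw [F.map_id]; infer_instance
  | comp f g hf hg ihf ihg => rw [F.map_comp]; exact IsIso.comp_isIso

/-- auxiliary strict universal property -/
noncomputable def supAux {D : Type*} [Category D] (W : MorphismProperty D)
    (T : Type*) [Category T] :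
    Localization.StrictUniversalPropertyFixedTarget (mclos W).Q W T where
  inverts := fun _ _ f hf => (mclos W).Q_inverts f (MClos.of f hf)
  lift F hF := Localization.Construction.lift F (MClos.isInvertedBy hF)
  fac F _ := Localization.Construction.fac F _
  uniq F₁ F₂ h := Localization.Construction.uniq F₁ F₂ h

lemma isLocalization_mclos {D D' : Type*} [Category D] [Category D'] (L : D ⥤ D')
    (W : MorphismProperty D) [L.IsLocalization W] :
    L.IsLocalization (mclos W) := by
  haveI : (mclos W).Q.IsLocalization W :=
    Functor.IsLocalization.mk' _ _ (supAux W _) (supAux W _)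
  exact Functor.IsLocalization.of_equivalence_target (mclos W).Q (mclos W) L
    (Localization.uniq _ L W) (Localization.compUniqFunctor _ L W)

lemma IsRetract.trans' {D : Type*} [Category D] {X Y Z : D}
    (h₁ : IsRetract X Y) (h₂ : IsRetract Y Z) : IsRetract X Z := by
  obtain ⟨i₁, r₁, h₁⟩ := h₁
  obtain ⟨i₂, r₂, h₂⟩ := h₂
  exact ⟨i₁ ≫ i₂, r₂ ≫ r₁, by rw [assoc, ← assoc i₂, h₂, id_comp, h₁]⟩

lemma IsRetract.of_iso {D : Type*} [Category D] {X Y : D} (e : X ≅ Y) : IsRetract X Y :=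
  ⟨e.hom, e.inv, e.hom_inv_id⟩

section Triang

variable (le ge : Set C)

/-- Characterization of `ge` by orthogonality. -/
lemma mem_ge_of_orth (w : IsWeightStructure C le ge) (X : C)
    (h : ∀ Y ∈ le, ∀ f : X ⟶ Y⟦(1 : ℤ)⟧, f = 0) : X ∈ ge := by
  obtain ⟨A, B, hA, hB, f, g, k, hT⟩ := w.decomp (X⟦(-1 : ℤ)⟧)
  have hι : (X⟦(-1 : ℤ)⟧)⟦(1 : ℤ)⟧ ≅ X := (shiftFunctorCompIsoId C (-1 : ℤ) (1 : ℤ) (by omega)).app X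
  have hf1 : (shiftFunctor C (1 : ℤ)).map f = 0 := by
    have h₀ : hι.inv ≫ (shiftFunctor C (1 : ℤ)).map f = 0 :=
      h A hA (hι.inv ≫ (shiftFunctor C (1 : ℤ)).map f)
    calc (shiftFunctor C (1 : ℤ)).map f
        = hι.hom ≫ (hι.inv ≫ (shiftFunctor C (1 : ℤ)).map f) := by
          rw [Iso.hom_inv_id_assoc]
      _ = 0 := by rw [h₀, comp_zero]
  have hf : f = 0 := by
    apply (shiftFunctor C (1 : ℤ)).map_injective
    rw [hf1, Functor.map_zero]
  obtain ⟨σ, hσ⟩ := Triangle.coyoneda_exact₃ _ (rot_of_distTriang _ hT)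
    (𝟙 ((X⟦(-1 : ℤ)⟧)⟦(1 : ℤ)⟧)) (by
      dsimp [Triangle.rotate]
      erw [hf1, neg_zero, comp_zero]; rfl)
  have h₁ : X⟦(-1 : ℤ)⟧⟦(1 : ℤ)⟧ ∈ ge := w.ge_retract hB ⟨σ, k, hσ.symm⟩
  exact w.ge_retract h₁ (IsRetract.of_iso hι.symm)

/-- `ge` is closed under extensions. -/
lemma ge_ext (w : IsWeightStructure C le ge) (T : Triangle C) (hT : T ∈ distTriang C)
    (h₁ : T.obj₁ ∈ ge) (h₃ : T.obj₃ ∈ ge) : T.obj₂ ∈ ge := by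
  apply mem_ge_of_orth le ge w
  intro Y hY φ
  obtain ⟨g', hg'⟩ := Triangle.yoneda_exact₂ T hT φ (w.orth h₁ hY _)
  rw [hg', w.orth h₃ hY g', comp_zero]

variable (DSet : Set C)

/-- Right Ore condition for the multiplicative closure. -/
lemma ore_aux : ∀ {Y Y' : C} (s : Y ⟶ Y'), MClos (coneInClass DSet) s →
    ∀ {X : C} (f : X ⟶ Y'),
      ∃ (X' : C) (s' : X' ⟶ X) (f' : X' ⟶ Y),
        MClos (coneInClass DSet) s' ∧ f' ≫ s = s' ≫ f := by
  intro Y Y' s hs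
  induction hs with
  | of s hs =>
    intro X f
    obtain ⟨N, e, h, hT, hN⟩ := hs
    obtain ⟨X', s', z, hT'⟩ := distinguished_cocone_triangle₁ (f ≫ e)
    have h0 : s' ≫ f ≫ e = 0 := comp_distTriang_mor_zero₁₂ _ hT'
    obtain ⟨f', hf'⟩ := Triangle.coyoneda_exact₂ _ hT (s' ≫ f)
      (by erw [assoc]; exact h0)
    exact ⟨X', s', f', MClos.of s' ⟨N, f ≫ e, z, hT', hN⟩, hf'.symm⟩
  | id Y => intro X f; exact ⟨X, 𝟙 X, f, MClos.id X, by simp⟩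
  | comp s₁ s₂ h₁ h₂ ih₁ ih₂ =>
    intro X f
    obtain ⟨X₁, s₂', f₂, hs₂', hc₂⟩ := ih₂ f
    obtain ⟨X₂, s₁', f₁, hs₁', hc₁⟩ := ih₁ f₂
    refine ⟨X₂, s₁' ≫ s₂', f₁, MClos.comp _ _ hs₁' hs₂', ?_⟩
    rw [← assoc, hc₁, assoc, hc₂, assoc]

/-- Cancellation for the multiplicative closure. -/
lemma cancel_aux (hD : TriangClosed DSet) :
    ∀ {Y Y' : C} (t : Y ⟶ Y'), MClos (coneInClass DSet) t →
      ∀ {X : C} (f : X ⟶ Y), f ≫ t = 0 →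
        ∃ (X' : C) (s : X' ⟶ X), MClos (coneInClass DSet) s ∧ s ≫ f = 0 := by
  intro Y Y' t ht
  induction ht with
  | of t ht =>
    intro X f hf
    obtain ⟨N, e, h, hT, hN⟩ := ht
    obtain ⟨g', hg'⟩ := Triangle.coyoneda_exact₂ _ (inv_rot_of_distTriang _ hT) f
      (by dsimp [Triangle.invRotate]; exact hf)
    obtain ⟨X', s, z, hT'⟩ := distinguished_cocone_triangle₁ g'
    have h0 : s ≫ g' = 0 := comp_distTriang_mor_zero₁₂ _ hT'
    refine ⟨X', s, MClos.of s ⟨N⟦(-1 : ℤ)⟧, g', z, hT', hD.2.2.1 hN⟩, ?_⟩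
    erw [hg', ← assoc, h0, zero_comp]
  | id Y =>
    intro X f hf
    rw [comp_id] at hf
    exact ⟨X, 𝟙 X, MClos.id X, by rw [id_comp, hf]⟩
  | comp t₁ t₂ h₁ h₂ ih₁ ih₂ =>
    intro X f hf
    obtain ⟨X₁, s₁, hs₁, h₁0⟩ := ih₂ (f ≫ t₁) (by rw [← assoc] at hf; exact hf)
    obtain ⟨X₂, s₂, hs₂, h₂0⟩ := ih₁ (s₁ ≫ f) (by rw [assoc]; exact h₁0)
    exact ⟨X₂, s₂ ≫ s₁, MClos.comp _ _ hs₂ hs₁, by rw [assoc]; exact h₂0⟩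

/-- The multiplicative closure of `coneInClass DSet` admits a right calculus of fractions. -/
lemma hasRightCalc (hD : TriangClosed DSet) :
    (mclos (coneInClass DSet)).HasRightCalculusOfFractions := by
  refine { id_mem := fun X => MClos.id X,
           comp_mem := fun f g hf hg => MClos.comp f g hf hg,
           exists_rightFraction := ?_, ext := ?_ }
  · intro X Y φ
    obtain ⟨X', s', f', hs', hc⟩ := ore_aux DSet φ.s φ.hs φ.f
    exact ⟨MorphismProperty.RightFraction.mk s' hs' f', hc.symm⟩
  · intro X Y Y' f₁ f₂ s hs h
    obtain ⟨X', t, ht, h0⟩ := cancel_aux DSet hD s hs (f₁ - f₂)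
      (by rw [Preadditive.sub_comp, h, sub_self])
    exact ⟨X', t, ht, by rwa [Preadditive.comp_sub, sub_eq_zero] at h0⟩

end Triang

end Auxiliary

section Main

variable (le ge : Set C) (DSet : Set C)

/-- Key lemma: any denominator over an object of `ge` can be dominated by an
object of `ge`. -/
lemma dominate (w : IsWeightStructure C le ge) (hD : TriangClosed DSet)
    (hind : IsWeightStructureOn DSet (DSet ∩ le) (DSet ∩ ge))
    (L : C ⥤ E) [L.IsLocalization (coneInClass DSet)] :
    ∀ {X'' X : C} (s : X'' ⟶ X), MClos (coneInClass DSet) s →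
      ∀ (Q : C) (p : Q ⟶ X), Q ∈ ge → IsIso (L.map p) →
        ∃ (Q' : C) (p' : Q' ⟶ Q) (g : Q' ⟶ X''),
          Q' ∈ ge ∧ IsIso (L.map p') ∧ g ≫ s = p' ≫ p := by
  intro X'' X s hs
  induction hs with
  | id Z =>
    intro Q p hQ hp
    exact ⟨Q, 𝟙 Q, p, hQ, by rw [L.map_id]; infer_instance, by simp⟩
  | comp s₁ s₂ h₁ h₂ ih₁ ih₂ =>
    intro Q p hQ hp
    obtain ⟨Q₁, p₁, g₂, hQ₁, hp₁, hfac₂⟩ := ih₂ Q p hQ hp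
    haveI : IsIso (L.map s₂) :=
      MClos.isInvertedBy (Localization.inverts L (coneInClass DSet)) s₂ h₂
    haveI := hp₁
    haveI := hp
    have hgi : IsIso (L.map g₂) := by
      rw [show L.map g₂ = (L.map p₁ ≫ L.map p) ≫ inv (L.map s₂) from by
        rw [IsIso.eq_comp_inv, ← L.map_comp, hfac₂, L.map_comp]]
      infer_instance
    obtain ⟨Q₂, p₂, g₁, hQ₂, hp₂, hfac₁⟩ := ih₁ Q₁ g₂ hQ₁ hgi
    refine ⟨Q₂, p₂ ≫ p₁, g₁, hQ₂, ?_, ?_⟩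
    · rw [L.map_comp]
      haveI := hp₂
      infer_instance
    · rw [← assoc, hfac₁, assoc, hfac₂, assoc]
  | of s hs =>
    intro Q p hQ hp
    obtain ⟨N, e, h, hT₁, hN⟩ := hs
    obtain ⟨A, B, hA, hB, f, g, k, hT₂⟩ := hind.decomp (N⟦(-1 : ℤ)⟧) (hD.2.2.1 hN)
    have ι : (N⟦(-1 : ℤ)⟧)⟦(1 : ℤ)⟧ ≅ N := (shiftFunctorCompIsoId C (-1 : ℤ) (1 : ℤ) (by omega)).app N
    -- the triangle `B ⟶ N ⟶ A⟦1⟧ ⟶ B⟦1⟧`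
    have hT₃ : Triangle.mk (k ≫ ι.hom)
        (ι.inv ≫ (-((shiftFunctor C (1 : ℤ)).map f)))
        (-((shiftFunctor C (1 : ℤ)).map g)) ∈ distTriang C := by
      refine isomorphic_distinguished _
        (rot_of_distTriang _ (rot_of_distTriang _ hT₂)) _ ?_
      refine Triangle.isoMk _ _ (Iso.refl _) ι.symm (Iso.refl _) ?_ ?_ ?_
      · dsimp [Triangle.rotate]; erw [id_comp, assoc, Iso.hom_inv_id, comp_id]; rfl
      · dsimp [Triangle.rotate]; erw [comp_id, Preadditive.comp_neg]; rfl
      · dsimp [Triangle.rotate]; erw [CategoryTheory.Functor.map_id, comp_id, id_comp]; rfl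
    have hc : (p ≫ e) ≫ (ι.inv ≫ (-((shiftFunctor C (1 : ℤ)).map f))) = 0 :=
      w.orth hQ hA.2 _
    obtain ⟨c', hc'⟩ := Triangle.coyoneda_exact₂ _ hT₃ (p ≫ e) hc
    obtain ⟨Q', p'', z, hT₄⟩ := distinguished_cocone_triangle₁ c'
    have hQ' : Q' ∈ ge := by
      have := ge_ext le ge w _ (inv_rot_of_distTriang _ hT₄)
        (w.ge_shift hB.2) hQ
      exact this
    have hp''W : coneInClass DSet p'' := ⟨B, c', z, hT₄, hB.1⟩
    have hp''iso : IsIso (L.map p'') :=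
      Localization.inverts L (coneInClass DSet) p'' hp''W
    have hcomp : p'' ≫ c' = 0 := comp_distTriang_mor_zero₁₂ _ hT₄
    have hc0 : (p'' ≫ p) ≫ e = 0 := by
      erw [assoc, hc', ← assoc, hcomp, zero_comp]
    obtain ⟨g₀, hg₀⟩ := Triangle.coyoneda_exact₂ _ hT₁ (p'' ≫ p) hc0
    exact ⟨Q', p'', g₀, hQ', hp''iso, hg₀.symm⟩

/-- Orthogonality in the quotient. -/
lemma hom_vanish (w : IsWeightStructure C le ge) (hD : TriangClosed DSet)
    (hind : IsWeightStructureOn DSet (DSet ∩ le) (DSet ∩ ge))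
    (L : C ⥤ E) [L.CommShift ℤ] [L.IsTriangulated]
    [L.IsLocalization (coneInClass DSet)]
    (X Y : C) (hX : X ∈ ge) (hY : Y ∈ le)
    (φ : L.obj X ⟶ L.obj (Y⟦(1 : ℤ)⟧)) : φ = 0 := by
  haveI : (mclos (coneInClass DSet)).HasRightCalculusOfFractions :=
    hasRightCalc DSet hD
  haveI : L.IsLocalization (mclos (coneInClass DSet)) :=
    isLocalization_mclos L (coneInClass DSet)
  obtain ⟨ζ, hζ⟩ := Localization.exists_rightFraction L (mclos (coneInClass DSet)) φ
  obtain ⟨Q', p', g, hQ', hp', hfac⟩ := dominate le ge DSet w hD hind L ζ.s ζ.hs X (𝟙 X)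
    hX (by rw [L.map_id]; infer_instance)
  rw [comp_id] at hfac
  have h0 : g ≫ ζ.f = 0 := w.orth hQ' hY _
  have key : L.map p' ≫ φ = 0 := by
    rw [hζ, show L.map p' = L.map g ≫ L.map ζ.s from by rw [← L.map_comp, hfac], assoc,
      MorphismProperty.RightFraction.map_s_comp_map, ← L.map_comp, h0, L.map_zero]
  haveI := hp'
  exact (cancel_epi (L.map p')).1 (by rw [key, comp_zero])

end Main

/-- Let `w` be a weight structure on `C` and `D ⊂ C` a triangulated subcategory (with
class of objects `DSet`) such that `w` induces a weight structure on `D`. Let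
`L : C ⥤ E` be the Verdier quotient functor `C → C/D` (an exact essentially surjective
localization at the morphisms whose cone is in `D`). Then the Karoubi-closures of
`L(C^{w≤0})` and `L(C^{w≥0})` define a weight structure on `C/D`. -/
theorem weightStructure_on_verdier_quotient
    (le ge : Set C) (w : IsWeightStructure C le ge)
    (DSet : Set C) (hD : TriangClosed DSet)
    (hind : IsWeightStructureOn DSet (DSet ∩ le) (DSet ∩ ge))
    (L : C ⥤ E) [L.CommShift ℤ] [L.IsTriangulated] [L.EssSurj]
    [L.IsLocalization (coneInClass DSet)] :
    IsWeightStructure E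
      {Y : E | ∃ X ∈ le, IsRetract Y (L.obj X)}
      {Y : E | ∃ X ∈ ge, IsRetract Y (L.obj X)} := by
  refine ⟨?_, ?_, ?_, ?_, ?_, ?_⟩
  · rintro X Y ⟨Z, hZ, hr⟩ hXY
    exact ⟨Z, hZ, hXY.trans' hr⟩
  · rintro X Y ⟨Z, hZ, hr⟩ hXY
    exact ⟨Z, hZ, hXY.trans' hr⟩
  · rintro X ⟨Z, hZ, i, r, hir⟩
    refine ⟨Z⟦(1 : ℤ)⟧, w.le_shift hZ,
      (shiftFunctor E (1 : ℤ)).map i ≫ ((L.commShiftIso (1 : ℤ)).app Z).inv,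
      ((L.commShiftIso (1 : ℤ)).app Z).hom ≫ (shiftFunctor E (1 : ℤ)).map r, ?_⟩
    rw [assoc, Iso.inv_hom_id_assoc, ← Functor.map_comp, hir, CategoryTheory.Functor.map_id]
  · rintro X ⟨Z, hZ, i, r, hir⟩
    refine ⟨Z⟦(-1 : ℤ)⟧, w.ge_shift hZ,
      (shiftFunctor E (-1 : ℤ)).map i ≫ ((L.commShiftIso (-1 : ℤ)).app Z).inv,
      ((L.commShiftIso (-1 : ℤ)).app Z).hom ≫ (shiftFunctor E (-1 : ℤ)).map r, ?_⟩
    rw [assoc, Iso.inv_hom_id_assoc, ← Functor.map_comp, hir, CategoryTheory.Functor.map_id]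
  · rintro X' Y' ⟨X, hX, i, r, hir⟩ ⟨Y, hY, i', r', hir'⟩ φ
    have hv : r ≫ φ ≫ (shiftFunctor E (1 : ℤ)).map i' ≫
        ((L.commShiftIso (1 : ℤ)).app Y).inv = 0 :=
      hom_vanish le ge DSet w hD hind L X Y hX hY _
    have key : φ = i ≫ (r ≫ φ ≫ (shiftFunctor E (1 : ℤ)).map i' ≫
        ((L.commShiftIso (1 : ℤ)).app Y).inv) ≫
        ((L.commShiftIso (1 : ℤ)).app Y).hom ≫ (shiftFunctor E (1 : ℤ)).map r' := by
      simp only [assoc, Iso.inv_hom_id_assoc]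
      rw [← Functor.map_comp, hir', CategoryTheory.Functor.map_id, comp_id, ← assoc, hir, id_comp]
    rw [key, hv, zero_comp, comp_zero]
  · intro M'
    obtain ⟨A, B, hA, hB, f, g, k, hT⟩ := w.decomp (L.objPreimage M')
    have e := L.objObjPreimageIso M'
    refine ⟨L.obj A, L.obj B, ⟨A, hA, 𝟙 _, 𝟙 _, by simp⟩, ⟨B, hB, 𝟙 _, 𝟙 _, by simp⟩,
      e.inv ≫ L.map f, L.map g,
      (L.map k ≫ (L.commShiftIso (1 : ℤ)).hom.app (L.objPreimage M')) ≫
        (shiftFunctor E (1 : ℤ)).map e.hom, ?_⟩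
    refine isomorphic_distinguished _ (L.map_distinguished _ hT) _ ?_
    refine Triangle.isoMk _ _ e.symm (Iso.refl _) (Iso.refl _) ?_ ?_ ?_
    · dsimp; erw [comp_id]; rfl
    · dsimp; erw [comp_id, id_comp]; rfl
    · dsimp
      change ((L.map k ≫ (L.commShiftIso (1 : ℤ)).hom.app (L.objPreimage M')) ≫
        (shiftFunctor E (1 : ℤ)).map e.hom) ≫ (shiftFunctor E (1 : ℤ)).map e.inv =
        𝟙 _ ≫ (L.map k ≫ (L.commShiftIso (1 : ℤ)).hom.app (L.objPreimage M'))
      simp only [assoc, ← Functor.map_comp, Iso.hom_inv_id, CategoryTheory.Functor.map_id, comp_id, id_comp]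
      erw [comp_id]
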